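/- If M is a product of finitely many matrices from {L, R} containing at least one L and at least one R, then M is not conjugate in SL(2,ℤ) to ±L^k or ±R^k for any integer k. In particular, M is not parabolic. -/

import Mathlib

open Matrix

lemma LR_word_entries (L R : Matrix.SpecialLinearGroup (Fin 2) ℤ)
    (hL : (L : Matrix (Fin 2) (Fin 2) ℤ) = !![1, 1; 0, 1])
    (hR : (R : Matrix (Fin 2) (Fin 2) ℤ) = !![1, 0; 1, 1]) :
    ∀ l : List (Matrix.SpecialLinearGroup (Fin 2) ℤ), (∀ x ∈ l, x = L ∨ x = R) →
      1 ≤ ((l.prod : Matrix.SpecialLinearGroup (Fin 2) ℤ) : Matrix (Fin 2) (Fin 2) ℤ) 0 0 ∧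
      1 ≤ ((l.prod : Matrix.SpecialLinearGroup (Fin 2) ℤ) : Matrix (Fin 2) (Fin 2) ℤ) 1 1 ∧
      0 ≤ ((l.prod : Matrix.SpecialLinearGroup (Fin 2) ℤ) : Matrix (Fin 2) (Fin 2) ℤ) 0 1 ∧
      0 ≤ ((l.prod : Matrix.SpecialLinearGroup (Fin 2) ℤ) : Matrix (Fin 2) (Fin 2) ℤ) 1 0 ∧
      (L ∈ l → 1 ≤ ((l.prod : Matrix.SpecialLinearGroup (Fin 2) ℤ) : Matrix (Fin 2) (Fin 2) ℤ) 0 1) ∧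
      (R ∈ l → 1 ≤ ((l.prod : Matrix.SpecialLinearGroup (Fin 2) ℤ) : Matrix (Fin 2) (Fin 2) ℤ) 1 0) := by
  have hne : L ≠ R := by
    intro h
    have := congrArg (fun A : Matrix.SpecialLinearGroup (Fin 2) ℤ => (A : Matrix (Fin 2) (Fin 2) ℤ) 0 1) h
    simp [hL, hR] at this
  intro l
  induction l with
  | nil =>
    intro _
    simp [Matrix.SpecialLinearGroup.coe_one, Matrix.one_apply]
  | cons x l ih =>
    intro hmem
    have hl : ∀ y ∈ l, y = L ∨ y = R := fun y hy => hmem y (List.mem_cons_of_mem x hy)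
    obtain ⟨h00, h11, h01, h10, hbL, hbR⟩ := ih hl
    set P := ((l.prod : Matrix.SpecialLinearGroup (Fin 2) ℤ) : Matrix (Fin 2) (Fin 2) ℤ) with hP
    have hprod : (((x :: l).prod : Matrix.SpecialLinearGroup (Fin 2) ℤ) : Matrix (Fin 2) (Fin 2) ℤ)
        = (x : Matrix (Fin 2) (Fin 2) ℤ) * P := by
      simp [List.prod_cons, hP]
    rcases hmem x List.mem_cons_self with hx | hx
    · subst hx
      refine ⟨?_, ?_, ?_, ?_, ?_, ?_⟩ <;>
        simp only [hprod, hL, Matrix.mul_apply, Fin.sum_univ_two,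
          Matrix.cons_val_zero, Matrix.cons_val_one, Matrix.head_cons, Matrix.head_fin_const]
      · simp; linarith
      · simp; linarith
      · simp; linarith
      · simp; linarith
      · intro _; simp; linarith
      · intro hr
        have : R ∈ l := by
          rcases List.mem_cons.mp hr with h | h
          · exact absurd h.symm hne
          · exact h
        have := hbR this
        simp; linarith
    · subst hx
      refine ⟨?_, ?_, ?_, ?_, ?_, ?_⟩ <;>
        simp only [hprod, hR, Matrix.mul_apply, Fin.sum_univ_two,
          Matrix.cons_val_zero, Matrix.cons_val_one, Matrix.head_cons, Matrix.head_fin_const]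
      · simp; linarith
      · simp; linarith
      · simp; linarith
      · simp; linarith
      · intro hr
        have : L ∈ l := by
          rcases List.mem_cons.mp hr with h | h
          · exact absurd h hne
          · exact h
        have := hbL this
        simp; linarith
      · intro _; simp; linarith

lemma Lpow_coe (L : Matrix.SpecialLinearGroup (Fin 2) ℤ)
    (hL : (L : Matrix (Fin 2) (Fin 2) ℤ) = !![1, 1; 0, 1]) (k : ℤ) :
    ((L ^ k : Matrix.SpecialLinearGroup (Fin 2) ℤ) : Matrix (Fin 2) (Fin 2) ℤ) = !![1, k; 0, 1] := by
  have : L = ModularGroup.T := by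
    ext i j
    fin_cases i <;> fin_cases j <;> simp [hL, ModularGroup.T]
  rw [this, ModularGroup.coe_T_zpow]

lemma Rpow_coe (R : Matrix.SpecialLinearGroup (Fin 2) ℤ)
    (hR : (R : Matrix (Fin 2) (Fin 2) ℤ) = !![1, 0; 1, 1]) (k : ℤ) :
    ((R ^ k : Matrix.SpecialLinearGroup (Fin 2) ℤ) : Matrix (Fin 2) (Fin 2) ℤ) = !![1, 0; k, 1] := by
  induction k using Int.induction_on with
  | zero => simp [Matrix.one_fin_two]
  | succ n ihn =>
    rw [_root_.zpow_add_one, Matrix.SpecialLinearGroup.coe_mul, ihn, hR]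
    norm_num [Matrix.mul_fin_two]
  | pred n ihn =>
    rw [_root_.zpow_sub_one, Matrix.SpecialLinearGroup.coe_mul, ihn]
    have : ((R⁻¹ : Matrix.SpecialLinearGroup (Fin 2) ℤ) : Matrix (Fin 2) (Fin 2) ℤ) = !![1, 0; -1, 1] := by
      simp [Matrix.SpecialLinearGroup.coe_inv, hR, Matrix.adjugate_fin_two]
    rw [this]
    norm_num [Matrix.mul_fin_two]
    ring_nf

/-- A finite product M of matrices from {L, R} containing both letters is not conjugate
in SL(2,ℤ) to ±L^k or ±R^k for any integer k; in particular M is not parabolic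
(its trace does not have absolute value 2). -/
theorem LR_word_not_conjugate_to_parabolic
    (L R : Matrix.SpecialLinearGroup (Fin 2) ℤ)
    (hL : (L : Matrix (Fin 2) (Fin 2) ℤ) = !![1, 1; 0, 1])
    (hR : (R : Matrix (Fin 2) (Fin 2) ℤ) = !![1, 0; 1, 1])
    (l : List (Matrix.SpecialLinearGroup (Fin 2) ℤ))
    (hmem : ∀ x ∈ l, x = L ∨ x = R)
    (hLmem : L ∈ l) (hRmem : R ∈ l)
    (M : Matrix.SpecialLinearGroup (Fin 2) ℤ) (hM : M = l.prod) :
    (∀ C : Matrix.SpecialLinearGroup (Fin 2) ℤ, ∀ k : ℤ,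
      ((C * M * C⁻¹ : Matrix.SpecialLinearGroup (Fin 2) ℤ) : Matrix (Fin 2) (Fin 2) ℤ)
        ≠ ((L ^ k : Matrix.SpecialLinearGroup (Fin 2) ℤ) : Matrix (Fin 2) (Fin 2) ℤ) ∧
      ((C * M * C⁻¹ : Matrix.SpecialLinearGroup (Fin 2) ℤ) : Matrix (Fin 2) (Fin 2) ℤ)
        ≠ -((L ^ k : Matrix.SpecialLinearGroup (Fin 2) ℤ) : Matrix (Fin 2) (Fin 2) ℤ) ∧
      ((C * M * C⁻¹ : Matrix.SpecialLinearGroup (Fin 2) ℤ) : Matrix (Fin 2) (Fin 2) ℤ)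
        ≠ ((R ^ k : Matrix.SpecialLinearGroup (Fin 2) ℤ) : Matrix (Fin 2) (Fin 2) ℤ) ∧
      ((C * M * C⁻¹ : Matrix.SpecialLinearGroup (Fin 2) ℤ) : Matrix (Fin 2) (Fin 2) ℤ)
        ≠ -((R ^ k : Matrix.SpecialLinearGroup (Fin 2) ℤ) : Matrix (Fin 2) (Fin 2) ℤ)) ∧
    |Matrix.trace ((M : Matrix (Fin 2) (Fin 2) ℤ))| ≠ 2 := by
  obtain ⟨h00, h11, h01, h10, hbL, hbR⟩ := LR_word_entries L R hL hR l hmem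
  rw [← hM] at h00 h11 h01 h10 hbL hbR
  have hb := hbL hLmem
  have hc := hbR hRmem
  have hdet : (M : Matrix (Fin 2) (Fin 2) ℤ).det = 1 := M.2
  rw [Matrix.det_fin_two] at hdet
  have hbc : 0 < (M : Matrix (Fin 2) (Fin 2) ℤ) 0 1 * (M : Matrix (Fin 2) (Fin 2) ℤ) 1 0 :=
    mul_pos (by linarith) (by linarith)
  have hbc1 : 1 ≤ (M : Matrix (Fin 2) (Fin 2) ℤ) 0 1 * (M : Matrix (Fin 2) (Fin 2) ℤ) 1 0 := hbc
  have htr : 3 ≤ Matrix.trace ((M : Matrix (Fin 2) (Fin 2) ℤ)) := by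
    rw [Matrix.trace_fin_two]
    rcases lt_or_ge ((M : Matrix (Fin 2) (Fin 2) ℤ) 0 0) 2 with h | h
    · have ha : (M : Matrix (Fin 2) (Fin 2) ℤ) 0 0 = 1 := by omega
      rw [ha] at hdet
      linarith
    · linarith
  constructor
  · intro C k
    have hconj : Matrix.trace ((C * M * C⁻¹ : Matrix.SpecialLinearGroup (Fin 2) ℤ) :
        Matrix (Fin 2) (Fin 2) ℤ) = Matrix.trace ((M : Matrix (Fin 2) (Fin 2) ℤ)) := by
      rw [Matrix.SpecialLinearGroup.coe_mul, Matrix.SpecialLinearGroup.coe_mul,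
        Matrix.trace_mul_cycle, ← Matrix.SpecialLinearGroup.coe_mul, inv_mul_cancel,
        Matrix.SpecialLinearGroup.coe_one, Matrix.one_mul]
    have htL : Matrix.trace ((L ^ k : Matrix.SpecialLinearGroup (Fin 2) ℤ) :
        Matrix (Fin 2) (Fin 2) ℤ) = 2 := by
      rw [Lpow_coe L hL k, Matrix.trace_fin_two]; norm_num
    have htR : Matrix.trace ((R ^ k : Matrix.SpecialLinearGroup (Fin 2) ℤ) :
        Matrix (Fin 2) (Fin 2) ℤ) = 2 := by
      rw [Rpow_coe R hR k, Matrix.trace_fin_two]; norm_num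
    refine ⟨fun h => ?_, fun h => ?_, fun h => ?_, fun h => ?_⟩ <;>
      have := congrArg Matrix.trace h <;>
      rw [hconj] at this <;>
      simp only [Matrix.trace_neg, htL, htR] at this <;>
      linarith
  · intro h
    rw [abs_of_nonneg (by linarith)] at h
    linarith
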